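/- For j = 1,…,n let G_j be a finite commutative group with a nondegenerate involutive bicharacter ⟨·,·⟩_j, let G = G₁ × ⋯ × G_n with the product bicharacter ⟨g,g'⟩ = ∏ⱼ ⟨g_j,g'_j⟩_j (which is nondegenerate and involutive), and for a subgroup K of G let K† = {g | ⟨h,g⟩ = 1 for all h ∈ K}. For M ⊆ {1,…,n} let B_M = {g ∈ G | g_j = 1 for all j ∉ M}; then (B_M)† = B_{M^c}, where M^c is the complement of M. If H is a subgroup of G with H ⊆ H†, then for every M ⊆ {1,…,n}: |(B_M ∩ H†)/(B_M ∩ H)| · |(B_{M^c} ∩ H†)/(B_{M^c} ∩ H)| = |H†/H|, where |·| denotes the cardinality of the quotient group. -/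

import Mathlib

/-- For a bicharacter `χ` on a commutative group `G` and a subgroup `K`, the subgroup
`K† = {g ∈ G | ⟨h,g⟩ = 1 for all h ∈ K}`. -/
def bidual {G : Type*} [CommGroup G] (χ : G → (G →* ℂˣ)) (K : Subgroup G) : Subgroup G where
  carrier := {g | ∀ h ∈ K, χ h g = 1}
  one_mem' := fun h _ => map_one (χ h)
  mul_mem' := fun {a b} ha hb h hK => by rw [map_mul, ha h hK, hb h hK, one_mul]
  inv_mem' := fun {a} ha h hK => by rw [map_inv, ha h hK, inv_one]

/-- The product bicharacter `⟨g,g'⟩ = ∏ⱼ ⟨gⱼ,g'ⱼ⟩ⱼ` on `G = G₁ × ⋯ × G_n`. -/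
def prodBichar {n : ℕ} {G : Fin n → Type*} [∀ j, CommGroup (G j)]
    (e : ∀ j, G j →* (G j →* ℂˣ)) : (∀ j, G j) →* ((∀ j, G j) →* ℂˣ) :=
  MonoidHom.mk'
    (fun g => MonoidHom.mk' (fun g' => ∏ j, e j (g j) (g' j))
      (fun a b => by simp [Pi.mul_apply, map_mul, Finset.prod_mul_distrib]))
    (fun a b => by
      ext g'
      simp [Pi.mul_apply, map_mul, MonoidHom.mul_apply, Finset.prod_mul_distrib])

/-- The subgroup `B_M = {g | gⱼ = 1 for all j ∉ M}` of elements supported on `M`. -/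
def suppSubgroup {n : ℕ} (G : Fin n → Type*) [∀ j, CommGroup (G j)] (M : Set (Fin n)) :
    Subgroup (∀ j, G j) where
  carrier := {g | ∀ j ∉ M, g j = 1}
  one_mem' := fun _ _ => rfl
  mul_mem' := fun {a b} ha hb j hj => by rw [Pi.mul_apply, ha j hj, hb j hj, one_mul]
  inv_mem' := fun {a} ha j hj => by rw [Pi.inv_apply, ha j hj, inv_one]


set_option linter.unusedSectionVars false

lemma mem_bidual {G : Type*} [CommGroup G] (χ : G → (G →* ℂˣ)) (K : Subgroup G) (g : G) :
    g ∈ bidual χ K ↔ ∀ h ∈ K, χ h g = 1 := Iff.rfl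

section Duality

variable (Γ : Type*) [CommGroup Γ] [Finite Γ]

lemma aux_card_hom : Nat.card (Γ →* ℂˣ) = Nat.card Γ := by
  have : NeZero (Monoid.exponent Γ) := ⟨Monoid.exponent_ne_zero_of_finite⟩
  exact Nat.card_congr (CommGroup.monoidHom_mulEquiv_of_hasEnoughRootsOfUnity Γ ℂ).some.toEquiv

lemma aux_finite_hom : Finite (Γ →* ℂˣ) := by
  have : NeZero (Monoid.exponent Γ) := ⟨Monoid.exponent_ne_zero_of_finite⟩
  exact Finite.of_equiv Γ (CommGroup.monoidHom_mulEquiv_of_hasEnoughRootsOfUnity Γ ℂ).some.toEquiv.symm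

/-- restriction of characters to a subgroup, as a hom -/
def auxRes (K : Subgroup Γ) : (Γ →* ℂˣ) →* (K →* ℂˣ) :=
  MonoidHom.mk' (fun f => f.comp K.subtype) (fun a b => by ext x; rfl)

lemma aux_res_surjective (K : Subgroup Γ) : Function.Surjective (auxRes Γ K) := by
  haveI := aux_finite_hom Γ
  haveI := aux_finite_hom K
  rw [← MonoidHom.range_eq_top]
  apply Subgroup.eq_top_of_card_eq
  -- card of kernel
  have hker : Nat.card (MonoidHom.ker (auxRes Γ K)) = Nat.card (Γ ⧸ K) := by
    rw [← aux_card_hom (Γ ⧸ K)]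
    refine (Nat.card_congr (Equiv.ofBijective
      (fun f : (Γ ⧸ K →* ℂˣ) => (⟨f.comp (QuotientGroup.mk' K), ?_⟩ :
        MonoidHom.ker (auxRes Γ K))) ⟨?_, ?_⟩)).symm
    · rw [MonoidHom.mem_ker]
      refine MonoidHom.ext fun k => ?_
      show f ((QuotientGroup.mk' K) (k : Γ)) = 1
      rw [QuotientGroup.mk'_apply, (QuotientGroup.eq_one_iff (k : Γ)).mpr k.2, map_one]
    · intro f g hfg
      have h1 := congrArg Subtype.val hfg
      simp only at h1
      exact (MonoidHom.cancel_right (QuotientGroup.mk'_surjective K)).mp h1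
    · rintro ⟨f, hf⟩
      have hf1 : ∀ k ∈ K, f k = 1 := by
        intro k hk
        have := DFunLike.congr_fun (MonoidHom.mem_ker.mp hf) (⟨k, hk⟩ : K)
        exact this
      refine ⟨QuotientGroup.lift K f hf1, ?_⟩
      apply Subtype.ext
      ext x
      rfl
  have h0 : Nat.card (Γ →* ℂˣ) =
      Nat.card ((Γ →* ℂˣ) ⧸ MonoidHom.ker (auxRes Γ K)) * Nat.card (MonoidHom.ker (auxRes Γ K)) :=
    Subgroup.card_eq_card_quotient_mul_card_subgroup _
  have h1 : Nat.card ((Γ →* ℂˣ) ⧸ MonoidHom.ker (auxRes Γ K)) =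
      Nat.card (MonoidHom.range (auxRes Γ K)) :=
    Nat.card_congr (QuotientGroup.quotientKerEquivRange _).toEquiv
  have h2 : Nat.card Γ = Nat.card (Γ ⧸ K) * Nat.card K :=
    Subgroup.card_eq_card_quotient_mul_card_subgroup K
  rw [aux_card_hom Γ, h2, h1, hker] at h0
  have hq : 0 < Nat.card (Γ ⧸ K) := Nat.card_pos
  rw [aux_card_hom K]
  -- h0 : card(Γ⧸K) * card K = card range * card (Γ⧸K)
  have := h0
  rw [mul_comm (Nat.card (MonoidHom.range (auxRes Γ K))) (Nat.card (Γ ⧸ K))] at this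
  exact (Nat.eq_of_mul_eq_mul_left hq this.symm)

lemma aux_card_bidual {Γ : Type*} [CommGroup Γ] [Finite Γ] (χ : Γ →* (Γ →* ℂˣ))
    (hχ : Function.Surjective ⇑(MonoidHom.flip χ)) (K : Subgroup Γ) :
    Nat.card (bidual (⇑χ) K) * Nat.card K = Nat.card Γ := by
  haveI := aux_finite_hom K
  have hks : bidual (⇑χ) K = MonoidHom.ker ((auxRes Γ K).comp (MonoidHom.flip χ)) := by
    ext g
    rw [mem_bidual, MonoidHom.mem_ker]
    constructor
    · intro hg
      refine MonoidHom.ext fun k => ?_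
      show χ (k : Γ) g = 1
      exact hg k k.2
    · intro hg h hh
      have := DFunLike.congr_fun hg (⟨h, hh⟩ : K)
      exact this
  have hsurj : Function.Surjective ((auxRes Γ K).comp (MonoidHom.flip χ)) :=
    (aux_res_surjective Γ K).comp hχ
  have h0 : Nat.card Γ =
      Nat.card (Γ ⧸ MonoidHom.ker ((auxRes Γ K).comp (MonoidHom.flip χ)))
        * Nat.card (MonoidHom.ker ((auxRes Γ K).comp (MonoidHom.flip χ))) :=
    Subgroup.card_eq_card_quotient_mul_card_subgroup _
  have h1 : Nat.card (Γ ⧸ MonoidHom.ker ((auxRes Γ K).comp (MonoidHom.flip χ))) =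
      Nat.card K := by
    rw [Nat.card_congr (QuotientGroup.quotientKerEquivOfSurjective _ hsurj).toEquiv,
      aux_card_hom K]
  rw [hks, h0, h1, mul_comm]

end Duality

section SupInf

lemma aux_relIndex_mul {Γ : Type*} [Group Γ] [Finite Γ] {K L : Subgroup Γ} (h : K ≤ L) :
    K.relIndex L * Nat.card K = Nat.card L := by
  rw [Subgroup.relIndex, ← Nat.card_congr (Subgroup.subgroupOfEquivOfLe h).toEquiv]
  exact Subgroup.index_mul_card (K.subgroupOf L)

lemma aux_card_sup_inf {Γ : Type*} [CommGroup Γ] [Finite Γ] (K L : Subgroup Γ) :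
    Nat.card (K ⊔ L : Subgroup Γ) * Nat.card (K ⊓ L : Subgroup Γ) =
      Nat.card K * Nat.card L := by
  have h1 : Nat.card (K ⊔ L : Subgroup Γ) =
      Nat.card ((K ⊔ L : Subgroup Γ) ⧸ L.subgroupOf (K ⊔ L)) * Nat.card (L.subgroupOf (K ⊔ L)) :=
    Subgroup.card_eq_card_quotient_mul_card_subgroup _
  have h2 : Nat.card K = Nat.card (K ⧸ L.subgroupOf K) * Nat.card (L.subgroupOf K) :=
    Subgroup.card_eq_card_quotient_mul_card_subgroup _
  have h3 : Nat.card (L.subgroupOf (K ⊔ L)) = Nat.card L :=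
    Nat.card_congr (Subgroup.subgroupOfEquivOfLe le_sup_right).toEquiv
  have h4 : Nat.card (L.subgroupOf K) = Nat.card (K ⊓ L : Subgroup Γ) := by
    rw [← Subgroup.inf_subgroupOf_right L K,
      Nat.card_congr (Subgroup.subgroupOfEquivOfLe inf_le_right).toEquiv, inf_comm]
  have h5 : Nat.card ((K ⊔ L : Subgroup Γ) ⧸ L.subgroupOf (K ⊔ L)) =
      Nat.card (K ⧸ L.subgroupOf K) :=
    (Nat.card_congr (QuotientGroup.quotientInfEquivProdNormalQuotient K L).toEquiv).symm
  rw [h1, h3, h5, ← h4, h2]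
  ring

end SupInf


section Prod

variable {n : ℕ} {G : Fin n → Type*} [∀ j, CommGroup (G j)] [∀ j, Fintype (G j)]
  (e : ∀ j, G j ≃* (G j →* ℂˣ))

lemma mem_suppSubgroup (M : Set (Fin n)) (g : ∀ j, G j) :
    g ∈ suppSubgroup G M ↔ ∀ j ∉ M, g j = 1 := Iff.rfl

lemma aux_single (j : Fin n) (a : G j) (g : ∀ i, G i) :
    prodBichar (fun j => (e j : G j →* (G j →* ℂˣ))) (Pi.mulSingle j a) g = e j a (g j) := by
  classical
  show (∏ i, (e i : G i →* (G i →* ℂˣ)) (Pi.mulSingle j a i) (g i)) = _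
  rw [Fintype.prod_eq_single j]
  · rw [Pi.mulSingle_eq_same]; rfl
  · intro i hi
    rw [Pi.mulSingle_eq_of_ne hi]
    simp

lemma aux_one_of_forall (hinvol : ∀ (j) (g g' : G j), e j g g' = 1 ↔ e j g' g = 1)
    (j : Fin n) (x : G j) (hx : ∀ a : G j, e j a x = 1) : x = 1 := by
  apply (e j).injective
  rw [map_one]
  exact MonoidHom.ext fun a => ((hinvol j a x).mp (hx a))

lemma aux_bidual_supp (hinvol : ∀ (j) (g g' : G j), e j g g' = 1 ↔ e j g' g = 1)
    (M : Set (Fin n)) :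
    bidual (⇑(prodBichar (fun j => (e j : G j →* (G j →* ℂˣ))))) (suppSubgroup G M)
      = suppSubgroup G Mᶜ := by
  ext g
  rw [mem_bidual, mem_suppSubgroup]
  constructor
  · intro hg j hj
    have hjM : j ∈ M := by simpa using hj
    refine aux_one_of_forall e hinvol j (g j) fun a => ?_
    rw [← aux_single e j a g]
    refine hg _ fun i hi => ?_
    exact Pi.mulSingle_eq_of_ne (fun h : i = j => hi (h ▸ hjM)) a
  · intro hg h hh
    show (∏ i, (e i : G i →* (G i →* ℂˣ)) (h i) (g i)) = 1
    apply Finset.prod_eq_one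
    intro i _
    by_cases hi : i ∈ M
    · rw [hg i (by simpa using hi), map_one]
    · rw [hh i hi]
      simp

lemma aux_flip_surj (hinvol : ∀ (j) (g g' : G j), e j g g' = 1 ↔ e j g' g = 1) :
    Function.Surjective
      ⇑(MonoidHom.flip (prodBichar (fun j => (e j : G j →* (G j →* ℂˣ))))) := by
  haveI := aux_finite_hom (∀ j, G j)
  set χ := prodBichar (fun j => (e j : G j →* (G j →* ℂˣ)))
  have hinj : Function.Injective ⇑(MonoidHom.flip χ) := by
    rw [injective_iff_map_eq_one]
    intro g hg
    funext j
    refine aux_one_of_forall e hinvol j (g j) fun a => ?_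
    rw [← aux_single e j a g]
    have := DFunLike.congr_fun hg (Pi.mulSingle j a)
    simpa using this
  exact ((Nat.bijective_iff_injective_and_card _).mpr
    ⟨hinj, (aux_card_hom (∀ j, G j)).symm⟩).2

lemma aux_card_supp_mul (M : Set (Fin n)) :
    Nat.card (suppSubgroup G M) * Nat.card (suppSubgroup G Mᶜ) = Nat.card (∀ j, G j) := by
  classical
  rw [← Nat.card_prod]
  apply Nat.card_eq_of_bijective (fun p => (p.1.1 : ∀ j, G j) * p.2.1)
  constructor
  · rintro ⟨⟨a, ha⟩, ⟨b, hb⟩⟩ ⟨⟨a', ha'⟩, ⟨b', hb'⟩⟩ hpq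
    simp only at hpq
    have h' : ∀ j, a j * b j = a' j * b' j := fun j => congrFun hpq j
    have HA : a = a' := by
      funext j
      by_cases hj : j ∈ M
      · have h1 : b j = 1 := hb j (by simpa using hj)
        have h2 : b' j = 1 := hb' j (by simpa using hj)
        have := h' j
        rwa [h1, h2, mul_one, mul_one] at this
      · rw [ha j hj, ha' j hj]
    have HB : b = b' := by
      funext j
      by_cases hj : j ∈ M
      · rw [hb j (by simpa using hj), hb' j (by simpa using hj)]
      · have := h' j
        rwa [ha j hj, ha' j hj, one_mul, one_mul] at this
    simp [HA, HB]
  · intro g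
    refine ⟨⟨⟨fun j => if j ∈ M then g j else 1, fun j hj => if_neg hj⟩,
      ⟨fun j => if j ∈ M then 1 else g j, fun j hj => if_pos (by simpa using hj)⟩⟩, ?_⟩
    funext j
    by_cases hj : j ∈ M <;> simp [hj]

lemma aux_bidual_sup {Γ : Type*} [CommGroup Γ] (χ : Γ →* (Γ →* ℂˣ)) (K L : Subgroup Γ) :
    bidual (⇑χ) (K ⊔ L) = bidual (⇑χ) K ⊓ bidual (⇑χ) L := by
  ext g
  simp only [Subgroup.mem_inf, mem_bidual]
  constructor
  · exact fun hg => ⟨fun h hh => hg h (Subgroup.mem_sup_left hh),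
      fun h hh => hg h (Subgroup.mem_sup_right hh)⟩
  · rintro ⟨h1, h2⟩ x hx
    obtain ⟨y, hy, z, hz, rfl⟩ := Subgroup.mem_sup.mp hx
    rw [map_mul, MonoidHom.mul_apply, h1 y hy, h2 z hz, one_mul]

end Prod


lemma aux_arith (x1 x2 x3 cG cH cHD cA cB cAiH cAiD cBiH cBiD cAsH cBsH : ℕ)
    (hG : 0 < cG) (hHpos : 0 < cH)
    (E1 : x1 * cAiH = cAiD) (E2 : x2 * cBiH = cBiD) (E3 : x3 * cH = cHD)
    (E4 : cHD * cH = cG) (E5 : cAiD * cBsH = cG) (E6 : cBiD * cAsH = cG)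
    (E7 : cBsH * cBiH = cB * cH) (E8 : cAsH * cAiH = cA * cH) (E9 : cA * cB = cG) :
    x1 * x2 = x3 := by
  have L1 : x1 * x2 * (cAiH * (cBiH * (cAsH * cBsH))) = cG * cG := by
    calc x1 * x2 * (cAiH * (cBiH * (cAsH * cBsH)))
        = (x1 * cAiH) * ((x2 * cBiH) * (cAsH * cBsH)) := by ring
      _ = cAiD * (cBiD * (cAsH * cBsH)) := by rw [E1, E2]
      _ = (cAiD * cBsH) * (cBiD * cAsH) := by ring
      _ = cG * cG := by rw [E5, E6]
  have L2 : cAiH * (cBiH * (cAsH * cBsH)) = cG * (cH * cH) := by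
    calc cAiH * (cBiH * (cAsH * cBsH))
        = (cAsH * cAiH) * (cBsH * cBiH) := by ring
      _ = (cA * cH) * (cB * cH) := by rw [E7, E8]
      _ = (cA * cB) * (cH * cH) := by ring
      _ = cG * (cH * cH) := by rw [E9]
  have L3 : x3 * (cG * (cH * cH)) = cG * cG := by
    calc x3 * (cG * (cH * cH))
        = ((x3 * cH) * cH) * cG := by ring
      _ = (cHD * cH) * cG := by rw [E3]
      _ = cG * cG := by rw [E4]
  have key : x1 * x2 * (cG * (cH * cH)) = x3 * (cG * (cH * cH)) := by
    rw [← L2, L1, L2, ← L3]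
  exact Nat.eq_of_mul_eq_mul_right (by positivity) key


/-- Cleaning Lemma for a product of finite abelian groups.
For finite commutative groups `G_j` with nondegenerate involutive bicharacters `e j`,
the product bicharacter on `G = ∏ⱼ G_j` satisfies `(B_M)† = B_{Mᶜ}`, and for any subgroup
`H` with `H ⊆ H†` and any `M ⊆ {1,…,n}`:
`|(B_M ∩ H†)/(B_M ∩ H)| · |(B_{Mᶜ} ∩ H†)/(B_{Mᶜ} ∩ H)| = |H†/H|`. -/
theorem cleaning_identity_product_group {n : ℕ} {G : Fin n → Type*}
    [∀ j, CommGroup (G j)] [∀ j, Fintype (G j)]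
    (e : ∀ j, G j ≃* (G j →* ℂˣ))
    (hinvol : ∀ (j) (g g' : G j), e j g g' = 1 ↔ e j g' g = 1)
    (H : Subgroup (∀ j, G j))
    (hH : H ≤ bidual (prodBichar fun j => (e j : G j →* (G j →* ℂˣ))) H) :
    (∀ M : Set (Fin n),
        bidual (prodBichar fun j => (e j : G j →* (G j →* ℂˣ))) (suppSubgroup G M)
          = suppSubgroup G Mᶜ) ∧
      ∀ M : Set (Fin n),
        (suppSubgroup G M ⊓ H).relIndex
            (suppSubgroup G M ⊓ bidual (prodBichar fun j => (e j : G j →* (G j →* ℂˣ))) H)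
          * (suppSubgroup G Mᶜ ⊓ H).relIndex
              (suppSubgroup G Mᶜ ⊓
                bidual (prodBichar fun j => (e j : G j →* (G j →* ℂˣ))) H)
          = H.relIndex (bidual (prodBichar fun j => (e j : G j →* (G j →* ℂˣ))) H) := by
  classical
  have part1 : ∀ M : Set (Fin n),
      bidual (prodBichar fun j => (e j : G j →* (G j →* ℂˣ))) (suppSubgroup G M)
        = suppSubgroup G Mᶜ := fun M => aux_bidual_supp e hinvol M
  refine ⟨part1, fun M => ?_⟩
  have hsurj := aux_flip_surj e hinvol
  set χ : (∀ j, G j) →* ((∀ j, G j) →* ℂˣ) :=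
    prodBichar fun j => (e j : G j →* (G j →* ℂˣ)) with hχ
  have hBd : bidual (⇑χ) (suppSubgroup G Mᶜ) = suppSubgroup G M := by
    rw [part1 Mᶜ, compl_compl]
  have hAd : bidual (⇑χ) (suppSubgroup G M) = suppSubgroup G Mᶜ := part1 M
  have E1 := aux_relIndex_mul (inf_le_inf_left (suppSubgroup G M) hH)
  have E2 := aux_relIndex_mul (inf_le_inf_left (suppSubgroup G Mᶜ) hH)
  have E3 := aux_relIndex_mul hH
  have E4 := aux_card_bidual χ hsurj H
  have E5 : Nat.card (suppSubgroup G M ⊓ bidual (⇑χ) H : Subgroup (∀ j, G j))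
      * Nat.card (suppSubgroup G Mᶜ ⊔ H : Subgroup (∀ j, G j)) = Nat.card (∀ j, G j) := by
    have h := aux_card_bidual χ hsurj (suppSubgroup G Mᶜ ⊔ H)
    rwa [aux_bidual_sup, hBd] at h
  have E6 : Nat.card (suppSubgroup G Mᶜ ⊓ bidual (⇑χ) H : Subgroup (∀ j, G j))
      * Nat.card (suppSubgroup G M ⊔ H : Subgroup (∀ j, G j)) = Nat.card (∀ j, G j) := by
    have h := aux_card_bidual χ hsurj (suppSubgroup G M ⊔ H)
    rwa [aux_bidual_sup, hAd] at h
  have E7 := aux_card_sup_inf (suppSubgroup G Mᶜ) H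
  have E8 := aux_card_sup_inf (suppSubgroup G M) H
  have E9 := aux_card_supp_mul (G := G) M
  exact aux_arith _ _ _ _ _ _ _ _ _ _ _ _ _ _ Nat.card_pos Nat.card_pos
    E1 E2 E3 E4 E5 E6 E7 E8 E9
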